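/- arXiv:1508.01009 — 3 statements merged into one kernel-verified Lean document; each statement's English description precedes it below -/
import Mathlib

section
/- For all a ≥ 0, x ≥ 0, and n ≥ 1, the generalized Baskakov weights sum to one: ∑_{k=0}^∞ W_{n,k}^a(x) = 1. -/
noncomputable def rising (n i : ℕ) : ℝ := ∏ j ∈ Finset.range i, ((n : ℝ) + j)

noncomputable def pk (n : ℕ) (a : ℝ) (k : ℕ) : ℝ :=
  ∑ i ∈ Finset.range (k + 1), (k.choose i : ℝ) * rising n i * a ^ (k - i)

noncomputable def W (n : ℕ) (a x : ℝ) (k : ℕ) : ℝ :=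
  Real.exp (-(a * x) / (1 + x)) * (pk n a k / (k.factorial : ℝ)) * x ^ k / (1 + x) ^ (k + n)

lemma rising_eq (m i : ℕ) : rising (m + 1) i = ((i + m).choose m : ℝ) * i.factorial := by
  induction i with
  | zero => simp [rising]
  | succ i ih =>
    have h1 : rising (m + 1) (i + 1) = rising (m + 1) i * ((m : ℝ) + 1 + i) := by
      rw [rising, rising, Finset.prod_range_succ]; push_cast; ring
    have key : ((i + 1 + m).choose m) * (i + 1) = ((i + m).choose m) * (i + m + 1) := by
      have h2 : (i + m).choose m = (i + m).choose i := Nat.choose_symm_add.symm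
      have h3 : (i + 1 + m).choose m = (i + 1 + m).choose (i + 1) := by
        rw [show i + 1 + m = (i + 1) + m from rfl, Nat.choose_symm_add]
      have h4 := Nat.add_one_mul_choose_eq (i + m) i
      have h5 : i + m + 1 = i + 1 + m := by omega
      rw [h5] at h4
      rw [h3, h2, h5, ← h4]
      ring
    have keyR : ((i + 1 + m).choose m : ℝ) * (i + 1) = ((i + m).choose m : ℝ) * (i + m + 1) := by
      exact_mod_cast congrArg (Nat.cast : ℕ → ℝ) key
    rw [h1, ih, Nat.factorial_succ]
    push_cast
    nlinarith [keyR]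

theorem baskakov_weights_sum_to_one (a x : ℝ) (ha : 0 ≤ a) (hx : 0 ≤ x)
    (n : ℕ) (hn : 1 ≤ n) :
    ∑' k : ℕ, W n a x k = 1 := by
  obtain ⟨m, rfl⟩ : ∃ m, n = m + 1 := ⟨n - 1, by omega⟩
  have hx1 : (0:ℝ) < 1 + x := by linarith
  set t : ℝ := x / (1 + x) with htdef
  set u : ℝ := a * x / (1 + x) with hudef
  have ht0 : 0 ≤ t := div_nonneg hx hx1.le
  have ht1 : t < 1 := (div_lt_one hx1).2 (by linarith)
  have htnorm : ‖t‖ < 1 := by rw [Real.norm_eq_abs, abs_of_nonneg ht0]; exact ht1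
  have h1mt : 1 - t = 1 / (1 + x) := by
    rw [htdef]; field_simp; ring
  set f : ℕ → ℝ := fun i => ((i + m).choose m : ℝ) * t ^ i with hfdef
  set g : ℕ → ℝ := fun j => u ^ j / j.factorial with hgdef
  have hfs : Summable f := summable_choose_mul_geometric_of_norm_lt_one m htnorm
  have hfnorm : Summable fun i => ‖f i‖ := by
    simpa [Real.norm_eq_abs] using hfs.abs
  have hgnorm : Summable fun j => ‖g j‖ := by
    simpa [hgdef, Real.norm_eq_abs, abs_div, abs_pow, Nat.abs_cast] using
      Real.summable_pow_div_factorial |u|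
  have hW : ∀ k, W (m + 1) a x k =
      Real.exp (-u) / (1 + x) ^ (m + 1) * ∑ i ∈ Finset.range (k + 1), f i * g (k - i) := by
    intro k
    have harg : -(a * x) / (1 + x) = -u := by rw [hudef]; ring
    rw [W, pk, harg]
    simp only [Finset.sum_div, Finset.mul_sum, Finset.sum_mul]
    refine Finset.sum_congr rfl fun i hi => ?_
    have hik : i ≤ k := by simpa [Nat.lt_succ_iff] using Finset.mem_range.1 hi
    rw [rising_eq]
    have hfact : (k.choose i : ℝ) = (k.factorial : ℝ) / (i.factorial * (k - i).factorial) := by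
      rw [eq_div_iff (by positivity)]
      push_cast
      rw [← mul_assoc]
      exact_mod_cast Nat.choose_mul_factorial_mul_factorial hik
    have hxk : x ^ k = x ^ i * x ^ (k - i) := by rw [← pow_add, Nat.add_sub_cancel' hik]
    have hxx : ((1:ℝ) + x) ^ (k + (m + 1)) = (1 + x) ^ i * (1 + x) ^ (k - i) * (1 + x) ^ (m + 1) := by
      rw [← pow_add, ← pow_add]; congr 1; omega
    have hk0 : (k.factorial : ℝ) ≠ 0 := by positivity
    have hi0 : (i.factorial : ℝ) ≠ 0 := by positivity
    have hki0 : ((k - i).factorial : ℝ) ≠ 0 := by positivity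
    rw [hfact, hxk, hxx]
    simp only [hfdef, hgdef, htdef, hudef]
    field_simp
    rw [div_pow, div_pow, mul_pow]; field_simp
  rw [tsum_congr hW, tsum_mul_left,
    ← tsum_mul_tsum_eq_tsum_sum_range_of_summable_norm hfnorm hgnorm]
  have hsumf : ∑' i, f i = (1 + x) ^ (m + 1) := by
    rw [hfdef, tsum_choose_mul_geometric_of_norm_lt_one m htnorm, h1mt]
    rw [div_pow, one_pow, one_div, one_div, inv_inv]
  have hsumg : ∑' j, g j = Real.exp u := by
    rw [hgdef, Real.exp_eq_exp_ℝ, NormedSpace.exp_eq_tsum_div]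
  rw [hsumf, hsumg, Real.exp_neg]
  have h2 : ((1:ℝ) + x) ^ (m + 1) ≠ 0 := by positivity
  have h3 : Real.exp u ≠ 0 := (Real.exp_pos u).ne'
  field_simp
end

section
/- For f ∈ C[0,∞) uniformly continuous, a ≥ 0, x ≥ 0, n ≥ 1, and 0 ≤ α ≤ β, |L_{n,a}^{α,β}(f;x) − f(x)| ≤ (1 + √(γ_n^{α,β}(x)))·ω(f; (n+β)^{-1/2}), where γ_n^{α,β}(x) = ((n+β²)/(n+β))x² + ((n−2αβ)/(n+β))x + (a²/(n+β))·x²/(1+x)² − (2aβ/(n+β))·x²/(1+x) + (a(1+2α)/(n+β))·x/(1+x) + α²/(n+β). -/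
noncomputable def L (n : ℕ) (a α β : ℝ) (f : ℝ → ℝ) (x : ℝ) : ℝ :=
  ∑' k : ℕ, W n a x k * f (((k : ℝ) + α) / ((n : ℝ) + β))


noncomputable def omega (f : ℝ → ℝ) (δ : ℝ) : ℝ :=
  sSup {d : ℝ | ∃ t s : ℝ, 0 ≤ t ∧ 0 ≤ s ∧ |t - s| ≤ δ ∧ d = |f t - f s|}

lemma rising_zero (m : ℕ) : rising m 0 = 1 := by simp [rising]

lemma rising_nonneg (m i : ℕ) : 0 ≤ rising m i :=
  Finset.prod_nonneg fun j _ => by positivity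

lemma rising_shift (m i : ℕ) : rising m (i + 1) = (m : ℝ) * rising (m + 1) i := by
  rw [rising, Finset.prod_range_succ']
  simp only [Nat.cast_add, Nat.cast_zero, add_zero]
  rw [rising, mul_comm]
  congr 1
  refine Finset.prod_congr rfl fun j _ => ?_
  push_cast; ring

lemma rising_succ (m i : ℕ) : rising m (i + 1) = rising m i * ((m : ℝ) + i) := by
  simp [rising, Finset.prod_range_succ]

lemma factorial_ne' (i : ℕ) : ((i.factorial : ℝ)) ≠ 0 := by
  exact_mod_cast i.factorial_ne_zero

lemma rising_sum (m k : ℕ) :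
    ∑ i ∈ Finset.range (k + 1), rising m i / (i.factorial : ℝ)
      = rising (m + 1) k / (k.factorial : ℝ) := by
  induction k with
  | zero => simp [rising_zero]
  | succ k ih =>
    rw [Finset.sum_range_succ, ih, rising_shift, rising_succ]
    have h1 : ((k.factorial : ℝ)) ≠ 0 := factorial_ne' k
    have h2 : (((k+1).factorial : ℝ)) ≠ 0 := factorial_ne' (k+1)
    rw [Nat.factorial_succ] at h2 ⊢
    push_cast at h2 ⊢
    field_simp
    ring

lemma HasSum.congr' {f g : ℕ → ℝ} {s : ℝ} (h : HasSum f s) (he : ∀ i, f i = g i) :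
    HasSum g s := (funext he : f = g) ▸ h

lemma norm_summable_of_nonneg {g : ℕ → ℝ} (hg : ∀ i, 0 ≤ g i) (h : Summable g) :
    Summable fun i => ‖g i‖ :=
  h.congr fun i => by rw [Real.norm_eq_abs, abs_of_nonneg (hg i)]

lemma hasSum_A {u : ℝ} (h0 : 0 ≤ u) (h1 : u < 1) :
    ∀ m : ℕ, HasSum (fun i => rising m i / (i.factorial : ℝ) * u ^ i) ((1 - u)⁻¹ ^ m) := by
  intro m
  induction m with
  | zero =>
    have : (fun i => rising 0 i / (i.factorial : ℝ) * u ^ i)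
        = fun i => if i = 0 then (1 : ℝ) else 0 := by
      funext i
      cases i with
      | zero => simp [rising_zero]
      | succ i => simp [rising_shift]
    rw [this, pow_zero]
    exact hasSum_ite_eq 0 1
  | succ m ih =>
    have hg : HasSum (fun i => u ^ i) (1 - u)⁻¹ := hasSum_geometric_of_lt_one h0 h1
    have hfn : Summable fun i => ‖rising m i / (i.factorial : ℝ) * u ^ i‖ :=
      norm_summable_of_nonneg (fun i => mul_nonneg (div_nonneg (rising_nonneg m i)
        (by positivity)) (pow_nonneg h0 i)) ih.summable
    have hgn : Summable fun i => ‖u ^ i‖ :=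
      norm_summable_of_nonneg (fun i => by positivity) hg.summable
    have hc := hasSum_sum_range_mul_of_summable_norm hfn hgn
    rw [ih.tsum_eq, hg.tsum_eq] at hc
    rw [pow_succ]
    refine hc.congr' fun k => ?_
    have : ∑ i ∈ Finset.range (k + 1), rising m i / (i.factorial : ℝ) * u ^ i * u ^ (k - i)
        = ∑ i ∈ Finset.range (k + 1), rising m i / (i.factorial : ℝ) * u ^ k := by
      refine Finset.sum_congr rfl fun i hi => ?_
      rw [mul_assoc, ← pow_add, Nat.add_sub_cancel' (Finset.mem_range_succ_iff.mp hi)]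
    rw [this, ← Finset.sum_mul, rising_sum]

lemma hasSum_A1 {u : ℝ} (h0 : 0 ≤ u) (h1 : u < 1) (m : ℕ) :
    HasSum (fun i : ℕ => (i : ℝ) * (rising m i / (i.factorial : ℝ) * u ^ i))
      ((m : ℝ) * u * (1 - u)⁻¹ ^ (m + 1)) := by
  set g : ℕ → ℝ := fun i : ℕ => (i : ℝ) * (rising m i / (i.factorial : ℝ) * u ^ i) with hg
  have h := (hasSum_A h0 h1 (m + 1)).mul_left ((m : ℝ) * u)
  have hsh : ∀ i : ℕ, (m : ℝ) * u * (rising (m+1) i / (i.factorial : ℝ) * u ^ i) = g (i + 1) := by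
    intro i
    have hne : ((i.factorial : ℝ)) ≠ 0 := factorial_ne' i
    simp only [hg, rising_shift, Nat.factorial_succ, pow_succ]
    push_cast
    field_simp
  apply (hasSum_nat_add_iff' 1).mp
  have h2 := h.congr' hsh
  simpa [hg] using h2

lemma hasSum_A2 {u : ℝ} (h0 : 0 ≤ u) (h1 : u < 1) (m : ℕ) :
    HasSum (fun i : ℕ => (i : ℝ) ^ 2 * (rising m i / (i.factorial : ℝ) * u ^ i))
      ((m : ℝ) * u * (((m : ℝ) + 1) * u * (1 - u)⁻¹ ^ (m + 2) + (1 - u)⁻¹ ^ (m + 1))) := by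
  set g : ℕ → ℝ := fun i : ℕ => (i : ℝ) ^ 2 * (rising m i / (i.factorial : ℝ) * u ^ i) with hg
  have h := ((hasSum_A1 h0 h1 (m + 1)).add (hasSum_A h0 h1 (m + 1))).mul_left ((m : ℝ) * u)
  have hsh : ∀ i : ℕ, (m : ℝ) * u * ((i : ℝ) * (rising (m+1) i / (i.factorial : ℝ) * u ^ i)
      + rising (m+1) i / (i.factorial : ℝ) * u ^ i) = g (i + 1) := by
    intro i
    have hne : ((i.factorial : ℝ)) ≠ 0 := factorial_ne' i
    simp only [hg, rising_shift, Nat.factorial_succ, pow_succ]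
    push_cast
    field_simp
  apply (hasSum_nat_add_iff' 1).mp
  have h2 := h.congr' hsh
  have hv : (m : ℝ) * u * (((m : ℝ) + 1) * u * (1 - u)⁻¹ ^ (m + 2) + (1 - u)⁻¹ ^ (m + 1))
      = (m : ℝ) * u * (((m+1 : ℕ) : ℝ) * u * (1 - u)⁻¹ ^ (m + 1 + 1) + (1 - u)⁻¹ ^ (m + 1)) := by
    push_cast; ring_nf
  rw [hv]
  simpa [hg] using h2

lemma hasSum_B (lam : ℝ) :
    HasSum (fun j => Real.exp (-lam) * (lam ^ j / (j.factorial : ℝ))) 1 := by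
  have h := (NormedSpace.expSeries_div_hasSum_exp lam).mul_left (Real.exp (-lam))
  rw [← Real.exp_eq_exp_ℝ, ← Real.exp_add, neg_add_cancel, Real.exp_zero] at h
  exact h

lemma hasSum_B1 (lam : ℝ) :
    HasSum (fun j : ℕ => (j : ℝ) * (Real.exp (-lam) * (lam ^ j / (j.factorial : ℝ)))) lam := by
  set g : ℕ → ℝ := fun j : ℕ => (j : ℝ) * (Real.exp (-lam) * (lam ^ j / (j.factorial : ℝ))) with hg
  have h := (hasSum_B lam).mul_left lam
  have hsh : ∀ j : ℕ, lam * (Real.exp (-lam) * (lam ^ j / (j.factorial : ℝ))) = g (j + 1) := by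
    intro j
    have hne : ((j.factorial : ℝ)) ≠ 0 := factorial_ne' j
    simp only [hg, Nat.factorial_succ, pow_succ]
    push_cast
    field_simp
  apply (hasSum_nat_add_iff' 1).mp
  have h2 := (h.congr' hsh)
  simpa [hg] using h2

lemma hasSum_B2 (lam : ℝ) :
    HasSum (fun j : ℕ => (j : ℝ) ^ 2 * (Real.exp (-lam) * (lam ^ j / (j.factorial : ℝ))))
      (lam * (lam + 1)) := by
  set g : ℕ → ℝ := fun j : ℕ => (j : ℝ) ^ 2 * (Real.exp (-lam) * (lam ^ j / (j.factorial : ℝ))) with hg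
  have h := ((hasSum_B1 lam).add (hasSum_B lam)).mul_left lam
  have hsh : ∀ j : ℕ, lam * ((j : ℝ) * (Real.exp (-lam) * (lam ^ j / (j.factorial : ℝ)))
      + Real.exp (-lam) * (lam ^ j / (j.factorial : ℝ))) = g (j + 1) := by
    intro j
    have hne : ((j.factorial : ℝ)) ≠ 0 := factorial_ne' j
    simp only [hg, Nat.factorial_succ, pow_succ]
    push_cast
    field_simp
  apply (hasSum_nat_add_iff' 1).mp
  have h2 := (h.congr' hsh)
  simpa [hg] using h2

lemma W_eq (n : ℕ) (a x : ℝ) (hx : 0 ≤ x) (k : ℕ) :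
    W n a x k = ((1 + x) ^ n)⁻¹ * ∑ i ∈ Finset.range (k + 1),
      (rising n i / (i.factorial : ℝ) * (x / (1 + x)) ^ i) *
        (Real.exp (-(a * (x / (1 + x)))) *
          ((a * (x / (1 + x))) ^ (k - i) / ((k - i).factorial : ℝ))) := by
  have h1x : (1 : ℝ) + x ≠ 0 := by linarith
  rw [W, pk, Finset.sum_div, Finset.mul_sum, Finset.sum_mul, Finset.sum_div, Finset.mul_sum]
  refine Finset.sum_congr rfl fun i hi => ?_
  have hik : i ≤ k := Finset.mem_range_succ_iff.mp hi
  have he : -(a * x) / (1 + x) = -(a * (x / (1 + x))) := by ring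
  have hch : ((k.choose i : ℕ) : ℝ) * (i.factorial : ℝ) * ((k - i).factorial : ℝ)
      = (k.factorial : ℝ) := by
    exact_mod_cast congrArg (Nat.cast : ℕ → ℝ)
      (Nat.choose_mul_factorial_mul_factorial hik)
  have hq : ((k.choose i : ℕ) : ℝ) / (k.factorial : ℝ)
      = 1 / ((i.factorial : ℝ) * ((k - i).factorial : ℝ)) := by
    rw [div_eq_div_iff (factorial_ne' k) (by positivity)]
    linarith [hch]
  have hxk : x ^ k = x ^ i * x ^ (k - i) := by
    rw [← pow_add, Nat.add_sub_cancel' hik]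
  have hvk : (1 + x) ^ (k + n) = (1 + x) ^ i * (1 + x) ^ (k - i) * (1 + x) ^ n := by
    rw [← pow_add, ← pow_add]; congr 1; omega
  calc Real.exp (-(a * x) / (1 + x)) * ((k.choose i : ℝ) * rising n i * a ^ (k - i) / (k.factorial : ℝ))
        * x ^ k / (1 + x) ^ (k + n)
      = Real.exp (-(a * x) / (1 + x)) * rising n i * a ^ (k - i) * x ^ k / (1 + x) ^ (k + n)
          * (((k.choose i : ℕ) : ℝ) / (k.factorial : ℝ)) := by ring
    _ = Real.exp (-(a * x) / (1 + x)) * rising n i * a ^ (k - i) * x ^ k / (1 + x) ^ (k + n)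
          * (1 / ((i.factorial : ℝ) * ((k - i).factorial : ℝ))) := by rw [hq]
    _ = _ := by
        rw [he, hxk, hvk, div_pow, mul_pow, div_pow]
        have hi' : ((i.factorial : ℝ)) ≠ 0 := factorial_ne' i
        have hk' : (((k - i).factorial : ℝ)) ≠ 0 := factorial_ne' (k - i)
        field_simp

section Wsums

variable {n : ℕ} {a x : ℝ}

lemma u_nonneg (hx : 0 ≤ x) : 0 ≤ x / (1 + x) := by positivity

lemma u_lt_one (hx : 0 ≤ x) : x / (1 + x) < 1 := by
  rw [div_lt_one (by linarith)]; linarith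

lemma one_sub_u_inv (hx : 0 ≤ x) : (1 - x / (1 + x))⁻¹ = 1 + x := by
  have h1x : (1 : ℝ) + x ≠ 0 := by linarith
  rw [show (1 : ℝ) - x / (1 + x) = 1 / (1 + x) by field_simp; ring, one_div, inv_inv]

lemma A_nonneg (hx : 0 ≤ x) (i : ℕ) :
    0 ≤ rising n i / (i.factorial : ℝ) * (x / (1 + x)) ^ i :=
  mul_nonneg (div_nonneg (rising_nonneg n i) (by positivity))
    (pow_nonneg (u_nonneg hx) i)

lemma B_nonneg (ha : 0 ≤ a) (hx : 0 ≤ x) (j : ℕ) :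
    0 ≤ Real.exp (-(a * (x / (1 + x)))) * ((a * (x / (1 + x))) ^ j / (j.factorial : ℝ)) := by
  have := u_nonneg hx
  positivity

lemma W_nonneg (ha : 0 ≤ a) (hx : 0 ≤ x) (k : ℕ) : 0 ≤ W n a x k := by
  rw [W_eq n a x hx k]
  refine mul_nonneg (by positivity) (Finset.sum_nonneg fun i _ => ?_)
  exact mul_nonneg (A_nonneg hx i) (B_nonneg ha hx (k - i))

lemma hasSum_W_one (ha : 0 ≤ a) (hx : 0 ≤ x) : HasSum (W n a x) 1 := by
  set u := x / (1 + x) with hu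
  have hA := hasSum_A (u_nonneg hx) (u_lt_one hx) n
  have hB := hasSum_B (a * u)
  have hAn := norm_summable_of_nonneg (A_nonneg hx) hA.summable
  have hBn := norm_summable_of_nonneg (B_nonneg ha hx) hB.summable
  have hc := hasSum_sum_range_mul_of_summable_norm hAn hBn
  rw [hA.tsum_eq, hB.tsum_eq, one_sub_u_inv hx] at hc
  have h1x : (1 : ℝ) + x ≠ 0 := by linarith
  have h2 := hc.mul_left (((1 + x) ^ n)⁻¹)
  have hval : ((1 + x) ^ n)⁻¹ * ((1 + x) ^ n * 1) = 1 := by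
    rw [mul_one, inv_mul_cancel₀ (by positivity)]
  exact hval ▸ (h2.congr' fun k => (W_eq n a x hx k).symm)

lemma hasSum_W_poly (ha : 0 ≤ a) (hx : 0 ≤ x) (c : ℝ) :
    HasSum (fun k : ℕ => W n a x k * ((k : ℝ) + c) ^ 2)
      ((n : ℝ) * x * (1 + x) + a * (x / (1 + x))
        + ((n : ℝ) * x + a * (x / (1 + x)) + c) ^ 2) := by
  have hu0 := u_nonneg hx
  have hu1 := u_lt_one hx
  have h1x : (0 : ℝ) < 1 + x := by linarith
  set u := x / (1 + x) with hu
  set lam := a * u with hlam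
  set A : ℕ → ℝ := fun i => rising n i / (i.factorial : ℝ) * u ^ i with hA
  set B : ℕ → ℝ := fun j => Real.exp (-lam) * (lam ^ j / (j.factorial : ℝ)) with hB
  have hAs := hasSum_A hu0 hu1 n
  have hA1s := hasSum_A1 hu0 hu1 n
  have hA2s := hasSum_A2 hu0 hu1 n
  have hBs := hasSum_B lam
  have hB1s := hasSum_B1 lam
  have hB2s := hasSum_B2 lam
  have hBnn : ∀ j, 0 ≤ B j := B_nonneg ha hx
  -- component sequences
  have hq2 : HasSum (fun j : ℕ => ((j : ℝ) + c) * B j) (lam + c * 1) :=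
    (hB1s.add (hBs.mul_left c)).congr' fun j => by simp only [hB]; ring
  have hq3 : HasSum (fun j : ℕ => ((j : ℝ) + c) ^ 2 * B j)
      (lam * (lam + 1) + ((2 * c) * lam + c ^ 2 * 1)) :=
    (hB2s.add ((hB1s.mul_left (2 * c)).add (hBs.mul_left (c ^ 2)))).congr' fun j => by
      simp only [hB]; ring
  -- norm summabilities
  have hAn : Summable fun i => ‖A i‖ := norm_summable_of_nonneg (A_nonneg hx) hAs.summable
  have hA1n : Summable fun i : ℕ => ‖(i : ℝ) * A i‖ :=
    norm_summable_of_nonneg (fun i => mul_nonneg (Nat.cast_nonneg i) (A_nonneg hx i))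
      hA1s.summable
  have hA2n : Summable fun i : ℕ => ‖(i : ℝ) ^ 2 * A i‖ :=
    norm_summable_of_nonneg (fun i => mul_nonneg (by positivity) (A_nonneg hx i))
      hA2s.summable
  have hBn : Summable fun j => ‖B j‖ := norm_summable_of_nonneg hBnn hBs.summable
  have hq2n : Summable fun j : ℕ => ‖((j : ℝ) + c) * B j‖ := by
    have hmaj : Summable fun j : ℕ => (j : ℝ) * B j + |c| * B j :=
      hB1s.summable.add (hBs.summable.mul_left |c|)
    have hmaj' : Summable fun j : ℕ => ((j : ℝ) + |c|) * B j :=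
      hmaj.congr fun j => by ring
    refine Summable.of_nonneg_of_le (fun j => norm_nonneg _) (fun j => ?_) hmaj'
    rw [Real.norm_eq_abs, abs_mul, abs_of_nonneg (hBnn j)]
    have : |(j : ℝ) + c| ≤ (j : ℝ) + |c| := by
      calc |(j : ℝ) + c| ≤ |(j : ℝ)| + |c| := abs_add_le _ _
        _ = (j : ℝ) + |c| := by rw [abs_of_nonneg (Nat.cast_nonneg j)]
    exact mul_le_mul_of_nonneg_right this (hBnn j)
  have hq3n : Summable fun j : ℕ => ‖((j : ℝ) + c) ^ 2 * B j‖ :=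
    norm_summable_of_nonneg (fun j => mul_nonneg (sq_nonneg _) (hBnn j)) hq3.summable
  -- the three Cauchy products
  have hc1 := hasSum_sum_range_mul_of_summable_norm hA2n hBn
  have hc2 := hasSum_sum_range_mul_of_summable_norm hA1n hq2n
  have hc3 := hasSum_sum_range_mul_of_summable_norm hAn hq3n
  rw [hA2s.tsum_eq, hBs.tsum_eq] at hc1
  rw [hA1s.tsum_eq, hq2.tsum_eq] at hc2
  rw [hAs.tsum_eq, hq3.tsum_eq] at hc3
  have htot := ((hc1.add ((hc2.mul_left 2).add hc3)).mul_left (((1 + x) ^ n)⁻¹))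
  -- identify the function
  have hfun : ∀ k : ℕ, ((1 + x) ^ n)⁻¹ *
      ((∑ i ∈ Finset.range (k + 1), (i : ℝ) ^ 2 * A i * B (k - i))
        + (2 * (∑ i ∈ Finset.range (k + 1), (i : ℝ) * A i * ((((k - i : ℕ) : ℝ) + c) * B (k - i)))
          + ∑ i ∈ Finset.range (k + 1), A i * ((((k - i : ℕ) : ℝ) + c) ^ 2 * B (k - i))))
      = W n a x k * ((k : ℝ) + c) ^ 2 := by
    intro k
    rw [W_eq n a x hx k]
    have : (∑ i ∈ Finset.range (k + 1), A i * B (k - i)) * ((k : ℝ) + c) ^ 2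
        = (∑ i ∈ Finset.range (k + 1), (i : ℝ) ^ 2 * A i * B (k - i))
          + (2 * (∑ i ∈ Finset.range (k + 1), (i : ℝ) * A i * ((((k - i : ℕ) : ℝ) + c) * B (k - i)))
            + ∑ i ∈ Finset.range (k + 1), A i * ((((k - i : ℕ) : ℝ) + c) ^ 2 * B (k - i))) := by
      rw [Finset.sum_mul, Finset.mul_sum, ← Finset.sum_add_distrib, ← Finset.sum_add_distrib]
      refine Finset.sum_congr rfl fun i hi => ?_
      have hik : i ≤ k := Finset.mem_range_succ_iff.mp hi
      rw [Nat.cast_sub hik]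
      ring
    rw [← this]
    ring
  have H := htot.congr' hfun
  convert H using 1
  have h1u : (1 - u)⁻¹ = 1 + x := by rw [hu]; exact one_sub_u_inv hx
  rw [h1u]
  simp only [hlam, hu, pow_succ]
  field_simp
  ring

end Wsums

lemma chain_bound (f : ℝ → ℝ) (η K : ℝ) (hη : 0 < η)
    (hK : ∀ t s : ℝ, 0 ≤ t → 0 ≤ s → |t - s| ≤ η → |f t - f s| ≤ K) :
    ∀ m : ℕ, ∀ t s : ℝ, 0 ≤ t → 0 ≤ s → |t - s| ≤ m * η → |f t - f s| ≤ m * K := by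
  intro m
  induction m with
  | zero =>
    intro t s ht hs h
    simp only [Nat.cast_zero, zero_mul] at h ⊢
    have hts : t = s := by
      have := abs_nonneg (t - s)
      have : |t - s| = 0 := le_antisymm h this
      have := abs_eq_zero.mp this
      linarith
    simp [hts]
  | succ m ih =>
    have key : ∀ t s : ℝ, 0 ≤ t → 0 ≤ s → s ≤ t → |t - s| ≤ (m + 1 : ℕ) * η →
        |f t - f s| ≤ (m + 1 : ℕ) * K := by
      intro t s ht hs hst h
      set t' := max s (t - η) with ht'
      have h1 : s ≤ t' := le_max_left _ _
      have ht'0 : 0 ≤ t' := hs.trans h1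
      have ht't : t' ≤ t := max_le hst (by linarith)
      have h2 : |t - t'| ≤ η := by
        rw [abs_of_nonneg (by linarith)]
        have : t - η ≤ t' := le_max_right _ _
        linarith
      have hts : t - s ≤ ((m : ℝ) + 1) * η := by
        rw [abs_of_nonneg (by linarith)] at h
        push_cast at h
        linarith
      have h3 : |t' - s| ≤ m * η := by
        rw [abs_of_nonneg (by linarith)]
        have hmη : (0:ℝ) ≤ m * η := by positivity
        have : t' ≤ s + m * η := max_le (by linarith) (by linarith)
        linarith
      calc |f t - f s| ≤ |f t - f t'| + |f t' - f s| := abs_sub_le _ _ _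
        _ ≤ K + m * K := add_le_add (hK t t' ht ht'0 h2) (ih t' s ht'0 hs h3)
        _ = (m + 1 : ℕ) * K := by push_cast; ring
    intro t s ht hs h
    rcases le_total s t with hst | hst
    · exact key t s ht hs hst h
    · rw [abs_sub_comm] at h
      rw [abs_sub_comm]
      exact key s t hs ht hst h

section OmegaLemmas

variable {f : ℝ → ℝ} {δ : ℝ}

lemma omega_set_bddAbove (hf : UniformContinuousOn f (Set.Ici 0)) (hδ : 0 < δ) :
    BddAbove {d : ℝ | ∃ t s : ℝ, 0 ≤ t ∧ 0 ≤ s ∧ |t - s| ≤ δ ∧ d = |f t - f s|} := by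
  obtain ⟨η, hη, hη1⟩ := (Metric.uniformContinuousOn_iff_le.mp hf) 1 one_pos
  have hbase : ∀ t s : ℝ, 0 ≤ t → 0 ≤ s → |t - s| ≤ η → |f t - f s| ≤ 1 := by
    intro t s ht hs h
    have := hη1 t ht s hs (by rwa [Real.dist_eq])
    rwa [Real.dist_eq] at this
  refine ⟨(⌈δ / η⌉₊ : ℝ) * 1, fun d hd => ?_⟩
  obtain ⟨t, s, ht, hs, hts, rfl⟩ := hd
  refine chain_bound f η 1 hη hbase ⌈δ / η⌉₊ t s ht hs (hts.trans ?_)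
  rw [← div_le_iff₀ hη]
  exact Nat.le_ceil _

lemma le_omega (hf : UniformContinuousOn f (Set.Ici 0)) (hδ : 0 < δ)
    {t s : ℝ} (ht : 0 ≤ t) (hs : 0 ≤ s) (hts : |t - s| ≤ δ) :
    |f t - f s| ≤ omega f δ :=
  le_csSup (omega_set_bddAbove hf hδ) ⟨t, s, ht, hs, hts, rfl⟩

lemma omega_nonneg (hf : UniformContinuousOn f (Set.Ici 0)) (hδ : 0 < δ) :
    0 ≤ omega f δ :=
  (abs_nonneg _).trans (le_omega hf hδ le_rfl le_rfl (by simp [hδ.le]))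

lemma omega_bound (hf : UniformContinuousOn f (Set.Ici 0)) (hδ : 0 < δ)
    {t s : ℝ} (ht : 0 ≤ t) (hs : 0 ≤ s) :
    |f t - f s| ≤ (1 + |t - s| / δ) * omega f δ := by
  have hω := omega_nonneg hf hδ
  have h1 : |f t - f s| ≤ (⌈|t - s| / δ⌉₊ : ℝ) * omega f δ := by
    refine chain_bound f δ (omega f δ) hδ (fun t s ht hs h => le_omega hf hδ ht hs h)
      ⌈|t - s| / δ⌉₊ t s ht hs ?_
    rw [← div_le_iff₀ hδ]
    exact Nat.le_ceil _
  refine h1.trans (mul_le_mul_of_nonneg_right ?_ hω)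
  have := Nat.ceil_lt_add_one (by positivity : (0:ℝ) ≤ |t - s| / δ)
  linarith

end OmegaLemmas

set_option maxHeartbeats 1000000 in
theorem stancu_rate_of_convergence (a x α β : ℝ) (ha : 0 ≤ a) (hx : 0 ≤ x)
    (hα : 0 ≤ α) (hαβ : α ≤ β) (n : ℕ) (hn : 1 ≤ n)
    (f : ℝ → ℝ) (hf : UniformContinuousOn f (Set.Ici 0)) :
    |L n a α β f x - f x| ≤
      (1 + Real.sqrt (((n + β ^ 2) / (n + β)) * x ^ 2 + ((n - 2 * α * β) / (n + β)) * x
        + (a ^ 2 / (n + β)) * (x ^ 2 / (1 + x) ^ 2)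
        - (2 * a * β / (n + β)) * (x ^ 2 / (1 + x))
        + (a * (1 + 2 * α) / (n + β)) * (x / (1 + x))
        + α ^ 2 / (n + β))) * omega f (1 / Real.sqrt (n + β)) := by
  have hβ : 0 ≤ β := hα.trans hαβ
  have hn1 : (1 : ℝ) ≤ (n : ℝ) := by exact_mod_cast hn
  have hnb : (0 : ℝ) < (n : ℝ) + β := by linarith
  have h1x : (0 : ℝ) < 1 + x := by linarith
  have hsnb : (0 : ℝ) < Real.sqrt ((n : ℝ) + β) := Real.sqrt_pos.mpr hnb
  obtain ⟨δ, hδdef⟩ : ∃ y, y = 1 / Real.sqrt ((n : ℝ) + β) := ⟨_, rfl⟩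
  have hδ : 0 < δ := by rw [hδdef]; positivity
  obtain ⟨ω, hωdef⟩ : ∃ y, y = omega f δ := ⟨_, rfl⟩
  have hω0 : 0 ≤ ω := hωdef ▸ omega_nonneg hf hδ
  obtain ⟨c, hc⟩ : ∃ y, y = α - ((n : ℝ) + β) * x := ⟨_, rfl⟩
  obtain ⟨E, hE⟩ : ∃ y, y = (n : ℝ) * x * (1 + x) + a * (x / (1 + x))
      + ((n : ℝ) * x + a * (x / (1 + x)) + c) ^ 2 := ⟨_, rfl⟩
  have hE0 : 0 ≤ E := by
    rw [hE]
    positivity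
  obtain ⟨s, hs'⟩ : ∃ y : ℕ → ℝ, ∀ k : ℕ, y k = ((k : ℝ) + α) / ((n : ℝ) + β) :=
    ⟨_, fun _ => rfl⟩
  have hs0 : ∀ k, 0 ≤ s k := fun k => by
    rw [hs']
    positivity
  have hW1 : HasSum (W n a x) 1 := hasSum_W_one ha hx
  have hWp : HasSum (fun k : ℕ => W n a x k * ((k : ℝ) + c) ^ 2) E := by
    rw [hE]; exact hasSum_W_poly ha hx c
  have hWnn : ∀ k, 0 ≤ W n a x k := W_nonneg ha hx
  have hWD2 : HasSum (fun k : ℕ => W n a x k * (s k - x) ^ 2) (E / ((n : ℝ) + β) ^ 2) := by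
    have h := hWp.div_const (((n : ℝ) + β) ^ 2)
    refine h.congr' fun k => ?_
    have hsk : s k - x = ((k : ℝ) + c) / ((n : ℝ) + β) := by
      rw [hs', hc]; field_simp; ring
    rw [hsk, div_pow]
    ring
  -- summability of k ↦ W k * |s k - x|
  have hWabsD : Summable (fun k : ℕ => W n a x k * |s k - x|) := by
    refine Summable.of_nonneg_of_le (fun k => mul_nonneg (hWnn k) (abs_nonneg _))
      (fun k => ?_) (((hW1.summable.add hWD2.summable).div_const 2).congr fun k => rfl)
    have e0 : 0 ≤ W n a x k * (|s k - x| - 1) ^ 2 := mul_nonneg (hWnn k) (sq_nonneg _)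
    have e1 : W n a x k * (|s k - x| - 1) ^ 2
        = W n a x k * (s k - x) ^ 2 - 2 * (W n a x k * |s k - x|) + W n a x k := by
      rw [← sq_abs (s k - x)]; ring
    linarith
  -- the key bound on the first absolute moment
  have habsD_le : (∑' k, W n a x k * |s k - x|) ≤ Real.sqrt E / ((n : ℝ) + β) := by
    by_cases hEz : E = 0
    · have hterm0 : ∀ k, W n a x k * |s k - x| = 0 := by
        intro k
        have hle : W n a x k * (s k - x) ^ 2 ≤ 0 := by
          have := Summable.le_tsum hWD2.summable k
            (fun j _ => mul_nonneg (hWnn j) (sq_nonneg _))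
          rw [hWD2.tsum_eq, hEz, zero_div] at this
          exact this
        have h0 : W n a x k * (s k - x) ^ 2 = 0 :=
          le_antisymm hle (mul_nonneg (hWnn k) (sq_nonneg _))
        have hsq : (W n a x k * |s k - x|) ^ 2 = W n a x k * (W n a x k * (s k - x) ^ 2) := by
          rw [mul_pow, sq_abs]; ring
        have : (W n a x k * |s k - x|) ^ 2 = 0 := by rw [hsq, h0, mul_zero]
        exact pow_eq_zero_iff two_ne_zero |>.mp this
      have : (∑' k, W n a x k * |s k - x|) = 0 := by
        rw [tsum_congr hterm0, tsum_zero]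
      rw [this]
      positivity
    · have hEpos : 0 < E := lt_of_le_of_ne hE0 (Ne.symm hEz)
      obtain ⟨ε, hε⟩ : ∃ y, y = Real.sqrt E / ((n : ℝ) + β) := ⟨_, rfl⟩
      have hεpos : 0 < ε := by
        rw [hε]
        have := Real.sqrt_pos.mpr hEpos
        positivity
      have hRHS : HasSum (fun k : ℕ => (ε * W n a x k + (W n a x k * (s k - x) ^ 2) / ε) / 2)
          ((ε * 1 + (E / ((n : ℝ) + β) ^ 2) / ε) / 2) :=
        ((hW1.mul_left ε).add (hWD2.div_const ε)).div_const 2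
      have hEsq : Real.sqrt E * Real.sqrt E = E := Real.mul_self_sqrt hE0
      have hSne : Real.sqrt E ≠ 0 := (Real.sqrt_pos.mpr hEpos).ne'
      have hεsq : ε * ε = E / ((n : ℝ) + β) ^ 2 := by
        rw [hε, div_mul_div_comm, hEsq, sq]
      have hval : (ε * 1 + (E / ((n : ℝ) + β) ^ 2) / ε) / 2 = ε := by
        rw [← hεsq, mul_div_assoc, div_self hεpos.ne']
        ring
      rw [hval] at hRHS
      refine le_trans (Summable.tsum_le_tsum (fun k => ?_) hWabsD hRHS.summable)
        (hRHS.tsum_eq.trans hε).le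
      have e0 : 0 ≤ W n a x k * (|s k - x| - ε) ^ 2 := mul_nonneg (hWnn k) (sq_nonneg _)
      have e1 : W n a x k * (|s k - x| - ε) ^ 2
          = W n a x k * (s k - x) ^ 2 - 2 * ε * (W n a x k * |s k - x|)
            + ε ^ 2 * W n a x k := by
        rw [← sq_abs (s k - x)]; ring
      have e2 : 2 * ε * (W n a x k * |s k - x|)
          ≤ ε ^ 2 * W n a x k + W n a x k * (s k - x) ^ 2 := by linarith
      have h3 : W n a x k * |s k - x|
          ≤ (ε ^ 2 * W n a x k + W n a x k * (s k - x) ^ 2) / (2 * ε) := by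
        rw [le_div_iff₀ (by positivity)]
        linarith
      have h4 : (ε ^ 2 * W n a x k + W n a x k * (s k - x) ^ 2) / (2 * ε)
          = (ε * W n a x k + W n a x k * (s k - x) ^ 2 / ε) / 2 := by
        field_simp
      rw [← h4]
      exact h3
  -- pointwise bound
  obtain ⟨g, hg'⟩ : ∃ y : ℕ → ℝ, ∀ k : ℕ, y k = W n a x k * f (s k) - W n a x k * f x :=
    ⟨_, fun _ => rfl⟩
  have hptb : ∀ k, |g k| ≤ ω * W n a x k + (ω / δ) * (W n a x k * |s k - x|) := by
    intro k
    have h1 : g k = W n a x k * (f (s k) - f x) := by rw [hg']; ring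
    rw [h1, abs_mul, abs_of_nonneg (hWnn k)]
    have h2 : |f (s k) - f x| ≤ (1 + |s k - x| / δ) * ω := by
      rw [hωdef]; exact omega_bound hf hδ (hs0 k) hx
    have h3 := mul_le_mul_of_nonneg_left h2 (hWnn k)
    calc W n a x k * |f (s k) - f x| ≤ W n a x k * ((1 + |s k - x| / δ) * ω) := h3
      _ = ω * W n a x k + (ω / δ) * (W n a x k * |s k - x|) := by
          field_simp
  have hmaj : Summable (fun k : ℕ => ω * W n a x k + (ω / δ) * (W n a x k * |s k - x|)) :=
    (hW1.summable.mul_left ω).add (hWabsD.mul_left (ω / δ))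
  have hgn : Summable fun k => ‖g k‖ :=
    Summable.of_nonneg_of_le (fun k => norm_nonneg _)
      (fun k => by rw [Real.norm_eq_abs]; exact hptb k) hmaj
  have hgs : Summable g := hgn.of_norm
  -- identify L - f x with the tsum of g
  have hWfs : Summable (fun k : ℕ => W n a x k * f (s k)) :=
    (hgs.add (hW1.summable.mul_right (f x))).congr fun k => by rw [hg']; ring
  have hLfx : L n a α β f x - f x = ∑' k, g k := by
    have h2 : ∑' k : ℕ, W n a x k * f x = f x := by
      rw [tsum_mul_right, hW1.tsum_eq, one_mul]
    have hL : L n a α β f x = ∑' k, W n a x k * f (s k) := by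
      have : (fun k : ℕ => W n a x k * f (s k))
          = fun k : ℕ => W n a x k * f (((k : ℝ) + α) / ((n : ℝ) + β)) := by
        funext k; rw [hs']
      rw [this]; rfl
    rw [hL, ← h2, ← Summable.tsum_sub hWfs (hW1.summable.mul_right (f x))]
    exact tsum_congr fun k => (hg' k).symm
  -- final computation
  have hbound : |L n a α β f x - f x| ≤ ω + (ω / δ) * (Real.sqrt E / ((n : ℝ) + β)) := by
    rw [hLfx]
    have h1 : |∑' k, g k| ≤ ∑' k, ‖g k‖ := by
      have := norm_tsum_le_tsum_norm hgn
      rwa [Real.norm_eq_abs] at this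
    have h2 : (∑' k, ‖g k‖) ≤ ∑' k, (ω * W n a x k + (ω / δ) * (W n a x k * |s k - x|)) :=
      Summable.tsum_le_tsum (fun k => by rw [Real.norm_eq_abs]; exact hptb k) hgn hmaj
    have h3 : (∑' k : ℕ, (ω * W n a x k + (ω / δ) * (W n a x k * |s k - x|)))
        = ω * 1 + (ω / δ) * ∑' k, W n a x k * |s k - x| := by
      rw [Summable.tsum_add (hW1.summable.mul_left ω) (hWabsD.mul_left (ω / δ)),
        tsum_mul_left, tsum_mul_left, hW1.tsum_eq]
    have h4 : (ω / δ) * (∑' k, W n a x k * |s k - x|)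
        ≤ (ω / δ) * (Real.sqrt E / ((n : ℝ) + β)) :=
      mul_le_mul_of_nonneg_left habsD_le (by positivity)
    calc |∑' k, g k| ≤ ∑' k, ‖g k‖ := h1
      _ ≤ _ := h2
      _ = ω * 1 + (ω / δ) * ∑' k, W n a x k * |s k - x| := h3
      _ ≤ ω + (ω / δ) * (Real.sqrt E / ((n : ℝ) + β)) := by rw [mul_one]; linarith
  -- identify the sqrt expression
  have hγ : ((n + β ^ 2) / (n + β)) * x ^ 2 + (((n : ℝ) - 2 * α * β) / (n + β)) * x
        + (a ^ 2 / (n + β)) * (x ^ 2 / (1 + x) ^ 2)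
        - (2 * a * β / (n + β)) * (x ^ 2 / (1 + x))
        + (a * (1 + 2 * α) / (n + β)) * (x / (1 + x))
        + α ^ 2 / (n + β) = E / ((n : ℝ) + β) := by
    rw [hE, hc]
    field_simp
    ring
  have hsqrtγ : Real.sqrt (E / ((n : ℝ) + β)) = Real.sqrt E / Real.sqrt ((n : ℝ) + β) :=
    Real.sqrt_div hE0 _
  have hfin : (ω / δ) * (Real.sqrt E / ((n : ℝ) + β))
      = Real.sqrt (E / ((n : ℝ) + β)) * ω := by
    rw [hsqrtγ, hδdef]
    have hnbs : Real.sqrt ((n : ℝ) + β) * Real.sqrt ((n : ℝ) + β) = (n : ℝ) + β :=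
      Real.mul_self_sqrt hnb.le
    field_simp
    linear_combination (ω * Real.sqrt E) * hnbs
  rw [hγ, hsqrtγ, ← hδdef, ← hωdef]
  calc |L n a α β f x - f x| ≤ ω + (ω / δ) * (Real.sqrt E / ((n : ℝ) + β)) := hbound
    _ = ω + Real.sqrt E / Real.sqrt ((n : ℝ) + β) * ω := by
        rw [hfin, hsqrtγ]
    _ = (1 + Real.sqrt E / Real.sqrt ((n : ℝ) + β)) * ω := by ring
end

section
/- Let L be a positive linear functional on bounded continuous functions on [0,∞) with L(1)=1, let x ≥ 0, and let f be continuously differentiable on [0,∞) with f' uniformly continuous. Then for any δ > 0, |L(f) − f(x)| ≤ |f'(x)|·|L(t−x)| + ω(f';δ)·√(L((t−x)²))·(1 + δ^{-1}√(L((t−x)²))). -/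
/-- Chain lemma: if `g` varies by at most `C` over steps of size `η` (within `[0,∞)`),
then it varies by at most `n*C` over distance `n*η`. -/
lemma chain_bound_s12 (g : ℝ → ℝ) (C η : ℝ)
    (hC : ∀ a b : ℝ, 0 ≤ a → 0 ≤ b → |a - b| ≤ η → |g a - g b| ≤ C)
    (n : ℕ) (hn : 0 < n) (a b : ℝ) (ha : 0 ≤ a) (hb : 0 ≤ b)
    (hab : |a - b| ≤ n * η) : |g a - g b| ≤ n * C := by
  have hn' : (0:ℝ) < n := by exact_mod_cast hn
  set p : ℕ → ℝ := fun i => a + i * (b - a) / n with hp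
  have hpa : p 0 = a := by simp [hp]
  have hpb : p n = b := by
    show a + (n:ℝ) * (b - a) / n = b
    rw [mul_div_cancel_left₀ _ hn'.ne']; ring
  have hnonneg : ∀ i ≤ n, 0 ≤ p i := by
    intro i hi
    have hi' : (i:ℝ) ≤ n := by exact_mod_cast hi
    have h0 : (0:ℝ) ≤ i := Nat.cast_nonneg i
    rcases le_total a b with h | h
    · have hba : 0 ≤ b - a := by linarith
      have : 0 ≤ (i:ℝ) * (b - a) / n := by positivity
      simp only [hp]; linarith
    · have key : 0 ≤ (a - b) * (1 - (i:ℝ)/n) := by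
        apply mul_nonneg (by linarith)
        have : (i:ℝ)/n ≤ 1 := by
          rw [div_le_one hn']; exact hi'
        linarith
      have : p i - b = (a - b) * (1 - (i:ℝ)/n) := by
        simp only [hp]; field_simp; ring
      linarith [this ▸ key]
  have hstep : ∀ i < n, |g (p (i+1)) - g (p i)| ≤ C := by
    intro i hi
    apply hC _ _ (hnonneg _ hi) (hnonneg _ (le_of_lt hi))
    have : p (i+1) - p i = (b - a) / n := by
      simp only [hp]; push_cast; field_simp; ring
    rw [this, abs_div, abs_of_pos hn', div_le_iff₀ hn', abs_sub_comm]
    linarith [hab]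
  have htel : ∑ i ∈ Finset.range n, (g (p (i+1)) - g (p i)) = g b - g a := by
    rw [Finset.sum_range_sub (fun i => g (p i)), hpa, hpb]
  calc |g a - g b| = |∑ i ∈ Finset.range n, (g (p (i+1)) - g (p i))| := by
        rw [htel, abs_sub_comm]
    _ ≤ ∑ i ∈ Finset.range n, |g (p (i+1)) - g (p i)| :=
        Finset.abs_sum_le_sum_abs _ _
    _ ≤ ∑ _i ∈ Finset.range n, C := by
        apply Finset.sum_le_sum
        intro i hi
        exact hstep i (Finset.mem_range.mp hi)
    _ = n * C := by simp [mul_comm]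

theorem positive_functional_derivative_estimate
    (L : (ℝ → ℝ) →ₗ[ℝ] ℝ)
    (hpos : ∀ f : ℝ → ℝ, (∀ t, 0 ≤ t → 0 ≤ f t) → 0 ≤ L f)
    (hone : L (fun _ => 1) = 1)
    (x : ℝ) (hx : 0 ≤ x)
    (f f' : ℝ → ℝ) (hderiv : ∀ t, 0 ≤ t → HasDerivAt f (f' t) t)
    (hf' : UniformContinuousOn f' (Set.Ici 0))
    (δ : ℝ) (hδ : 0 < δ) :
    |L f - f x| ≤ |f' x| * |L (fun t => t - x)|
      + omega f' δ * Real.sqrt (L (fun t => (t - x) ^ 2))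
          * (1 + δ⁻¹ * Real.sqrt (L (fun t => (t - x) ^ 2))) := by
  -- notation
  set S : Set ℝ := {d : ℝ | ∃ t s : ℝ, 0 ≤ t ∧ 0 ≤ s ∧ |t - s| ≤ δ ∧ d = |f' t - f' s|}
    with hS
  set ω : ℝ := omega f' δ with hω
  have hωS : ω = sSup S := rfl
  -- S is bounded above, using uniform continuity
  obtain ⟨η, hη, hη1⟩ : ∃ η > 0, ∀ a ∈ Set.Ici (0:ℝ), ∀ b ∈ Set.Ici (0:ℝ),
      dist a b ≤ η → dist (f' a) (f' b) ≤ 1 :=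
    Metric.uniformContinuousOn_iff_le.mp hf' 1 one_pos
  have hstep1 : ∀ a b : ℝ, 0 ≤ a → 0 ≤ b → |a - b| ≤ η → |f' a - f' b| ≤ 1 := by
    intro a b ha hb h
    have := hη1 a ha b hb (by rwa [Real.dist_eq])
    rwa [Real.dist_eq] at this
  have hbdd : BddAbove S := by
    refine ⟨(⌈δ/η⌉₊ : ℝ), ?_⟩
    rintro d ⟨t, s, ht, hs, hts, rfl⟩
    have hN : 0 < ⌈δ/η⌉₊ := Nat.ceil_pos.mpr (by positivity)
    have hNδ : δ ≤ (⌈δ/η⌉₊ : ℝ) * η := by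
      have := Nat.le_ceil (δ/η)
      calc δ = δ/η * η := by field_simp
        _ ≤ (⌈δ/η⌉₊ : ℝ) * η := by nlinarith [hη]
    have := chain_bound_s12 f' 1 η hstep1 ⌈δ/η⌉₊ hN t s ht hs (le_trans hts hNδ)
    simpa using this
  have hmem : ∀ a b : ℝ, 0 ≤ a → 0 ≤ b → |a - b| ≤ δ → |f' a - f' b| ≤ ω := by
    intro a b ha hb h
    exact le_csSup hbdd ⟨a, b, ha, hb, h, rfl⟩
  have hω0 : 0 ≤ ω := by
    have : (0:ℝ) ∈ S := ⟨0, 0, le_refl _, le_refl _, by simpa using hδ.le, by simp⟩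
    exact le_csSup hbdd this
  -- pointwise estimate via mean value theorem and chaining
  have hpoint : ∀ t : ℝ, 0 ≤ t →
      |f t - f x - f' x * (t - x)| ≤ ω * (|t - x| + (t - x)^2 / δ) := by
    intro t ht
    rcases eq_or_ne t x with rfl | htx
    · simp
    -- MVT: get c between x and t with f t - f x = f' c * (t - x)
    obtain ⟨c, hc0, hcx, hcval⟩ : ∃ c, 0 ≤ c ∧ |c - x| ≤ |t - x| ∧
        f t - f x = f' c * (t - x) := by
      rcases lt_or_gt_of_ne htx with h | h
      · obtain ⟨c, hc, hceq⟩ := exists_hasDerivAt_eq_slope f f' h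
          (fun y hy => ((hderiv y (le_trans ht hy.1)).continuousAt).continuousWithinAt)
          (fun y hy => hderiv y (le_of_lt (lt_of_le_of_lt ht hy.1)))
        refine ⟨c, le_trans ht hc.1.le, ?_, ?_⟩
        · rw [abs_of_nonpos (by linarith [hc.2] : c - x ≤ 0),
            abs_of_nonpos (by linarith : t - x ≤ 0)]
          linarith [hc.1]
        · rw [hceq, div_mul_eq_mul_div, eq_div_iff (sub_ne_zero.mpr h.ne')]; ring
      · obtain ⟨c, hc, hceq⟩ := exists_hasDerivAt_eq_slope f f' h
          (fun y hy => ((hderiv y (le_trans hx hy.1)).continuousAt).continuousWithinAt)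
          (fun y hy => hderiv y (le_of_lt (lt_of_le_of_lt hx hy.1)))
        refine ⟨c, le_trans hx hc.1.le, ?_, ?_⟩
        · rw [abs_of_nonneg (by linarith [hc.1] : (0:ℝ) ≤ c - x),
            abs_of_nonneg (by linarith : (0:ℝ) ≤ t - x)]
          linarith [hc.2]
        · rw [hceq, div_mul_eq_mul_div, eq_div_iff (sub_ne_zero.mpr h.ne')]
    -- chain to estimate |f' c - f' x|
    have htx' : 0 < |t - x| := abs_pos.mpr (sub_ne_zero.mpr htx)
    set n : ℕ := ⌈|t - x| / δ⌉₊ with hn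
    have hn0 : 0 < n := Nat.ceil_pos.mpr (by positivity)
    have hnδ : |t - x| ≤ (n:ℝ) * δ := by
      have := Nat.le_ceil (|t - x| / δ)
      calc |t - x| = |t - x| / δ * δ := by field_simp
        _ ≤ (n:ℝ) * δ := by nlinarith [hδ]
    have hchain : |f' c - f' x| ≤ (n:ℝ) * ω :=
      chain_bound_s12 f' ω δ hmem n hn0 c x hc0 hx (le_trans hcx hnδ)
    have hnle : (n:ℝ) ≤ 1 + |t - x| / δ := by
      have := Nat.ceil_lt_add_one (a := |t - x| / δ) (by positivity)
      have : (n:ℝ) < |t - x| / δ + 1 := by exact_mod_cast this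
      linarith
    have key : |f' c - f' x| ≤ ω * (1 + |t - x| / δ) := by
      calc |f' c - f' x| ≤ (n:ℝ) * ω := hchain
        _ ≤ (1 + |t - x| / δ) * ω := by nlinarith
        _ = ω * (1 + |t - x| / δ) := by ring
    calc |f t - f x - f' x * (t - x)| = |f' c - f' x| * |t - x| := by
          rw [hcval, ← abs_mul]; ring_nf
      _ ≤ ω * (1 + |t - x| / δ) * |t - x| :=
          mul_le_mul_of_nonneg_right key (abs_nonneg _)
      _ = ω * (|t - x| + (t - x)^2 / δ) := by rw [← sq_abs (t - x)]; ring
  -- abbreviations for the functions involved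
  set one : ℝ → ℝ := fun _ => 1 with hone'
  set lin : ℝ → ℝ := fun t => t - x with hlin
  set sq : ℝ → ℝ := fun t => (t - x)^2 with hsq
  set ab : ℝ → ℝ := fun t => |t - x| with hab
  set Q : ℝ := L sq with hQ
  have hQ0 : 0 ≤ Q := hpos sq (fun t _ => sq_nonneg _)
  have hab0 : 0 ≤ L ab := hpos ab (fun t _ => abs_nonneg _)
  -- Cauchy-Schwarz type bound : L ab ≤ √Q
  have hCSgen : ∀ s : ℝ, 0 < s → L ab ≤ s/2 + Q/(2*s) := by
    intro s hs
    have hptw : ∀ t, 0 ≤ t → 0 ≤ ((s/2) • one + (1/(2*s)) • sq - ab) t := by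
      intro t _
      simp only [Pi.add_apply, Pi.sub_apply, Pi.smul_apply, smul_eq_mul, hone', hsq, hab]
      have hkey : (0:ℝ) ≤ (|t - x| - s)^2 / (2*s) := by positivity
      have heq : s/2 * 1 + 1/(2*s) * (t - x)^2 - |t - x| = (|t - x| - s)^2 / (2*s) := by
        rw [← sq_abs (t - x)]; field_simp; ring
      linarith
    have hthis := hpos _ hptw
    rw [map_sub, map_add, map_smul, map_smul, smul_eq_mul, smul_eq_mul, hone] at hthis
    have hfin : L ab ≤ s/2 + 1/(2*s) * Q := by rw [hQ]; linarith
    have : 1/(2*s) * Q = Q/(2*s) := by ring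
    linarith
  have hCS : L ab ≤ Real.sqrt Q := by
    rcases eq_or_lt_of_le hQ0 with h | h
    · rw [← h, Real.sqrt_zero]
      by_contra hcon
      push_neg at hcon
      have := hCSgen (L ab) hcon
      rw [← h] at this
      simp at this
      linarith
    · have hsQ : 0 < Real.sqrt Q := Real.sqrt_pos.mpr h
      have := hCSgen (Real.sqrt Q) hsQ
      have hQQ : Real.sqrt Q * Real.sqrt Q = Q := Real.mul_self_sqrt hQ0
      calc L ab ≤ Real.sqrt Q / 2 + Q / (2 * Real.sqrt Q) := this
        _ = Real.sqrt Q := by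
            have h2 : Q / (2 * Real.sqrt Q) = Real.sqrt Q / 2 := by
              rw [div_eq_div_iff (by positivity : (2:ℝ) * Real.sqrt Q ≠ 0)
                (by norm_num : (2:ℝ) ≠ 0)]
              linear_combination (-2) * hQQ
            rw [h2]; ring
  -- the remainder function
  set g : ℝ → ℝ := fun t => f t - f x - f' x * (t - x) with hg
  have hLg : L g = L f - f x - f' x * L lin := by
    have : g = f - (f x) • one - (f' x) • lin := by
      funext t
      simp only [hg, Pi.sub_apply, Pi.smul_apply, smul_eq_mul, hone', hlin]
      ring
    rw [this, map_sub, map_sub, map_smul, map_smul, smul_eq_mul, smul_eq_mul,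
      hone, mul_one]
  -- bound |L g|
  set h : ℝ → ℝ := ω • ab + (ω/δ) • sq with hh
  have hLh : L h = ω * L ab + (ω/δ) * Q := by
    rw [hh, map_add, map_smul, map_smul, smul_eq_mul, smul_eq_mul, hQ]
  have hbound : |L g| ≤ ω * L ab + (ω/δ) * Q := by
    rw [← hLh]
    rw [abs_le]
    have heqω : ∀ t : ℝ, ω * (|t - x| + (t - x)^2 / δ) = ω * |t - x| + ω/δ * (t - x)^2 := by
      intro t; ring
    constructor
    · have hge : 0 ≤ L (h + g) := by
        apply hpos
        intro t ht
        have hpt := hpoint t ht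
        have habs := (abs_le.mp hpt).1
        simp only [hh, hg, hab, hsq, Pi.add_apply, Pi.smul_apply, smul_eq_mul]
        linarith [heqω t]
      rw [map_add] at hge
      linarith
    · have hge : 0 ≤ L (h - g) := by
        apply hpos
        intro t ht
        have hpt := hpoint t ht
        have habs := (abs_le.mp hpt).2
        simp only [hh, hg, hab, hsq, Pi.sub_apply, Pi.add_apply, Pi.smul_apply, smul_eq_mul]
        linarith [heqω t]
      rw [map_sub] at hge
      linarith
  -- conclusion
  have hfinal : |L f - f x| ≤ |f' x| * |L lin| + ω * L ab + (ω/δ) * Q := by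
    have : L f - f x = L g + f' x * L lin := by rw [hLg]; ring
    rw [this]
    calc |L g + f' x * L lin| ≤ |L g| + |f' x * L lin| := abs_add_le _ _
      _ = |L g| + |f' x| * |L lin| := by rw [abs_mul]
      _ ≤ (ω * L ab + (ω/δ) * Q) + |f' x| * |L lin| := by linarith [hbound]
      _ = |f' x| * |L lin| + ω * L ab + (ω/δ) * Q := by ring
  have hQQ : Real.sqrt Q * Real.sqrt Q = Q := Real.mul_self_sqrt hQ0
  have hmono : ω * L ab ≤ ω * Real.sqrt Q := mul_le_mul_of_nonneg_left hCS hω0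
  have hrhs : ω * Real.sqrt Q * (1 + δ⁻¹ * Real.sqrt Q)
      = ω * Real.sqrt Q + (ω/δ) * Q := by
    linear_combination (ω * δ⁻¹) * hQQ
  calc |L f - f x| ≤ |f' x| * |L lin| + ω * L ab + (ω/δ) * Q := hfinal
    _ ≤ |f' x| * |L lin| + ω * Real.sqrt Q + (ω/δ) * Q := by linarith
    _ = |f' x| * |L lin| + ω * Real.sqrt Q * (1 + δ⁻¹ * Real.sqrt Q) := by
        rw [hrhs]; ring
end
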